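/- (Weakly Extended Singleton Bound) For any strongly regular ω-dimensional linear network error correction code on a single-source acyclic network G=(V,E) and any non-source node t∈V, the minimum distance at t satisfies d_min^{(t)}(G) ≤ δ_t+1 if C_t ≥ ω, and d_min^{(t)}(G) ≤ 1 if C_t < ω. -/

import Mathlib

open scoped BigOperators

/-- A single-source finite acyclic directed multigraph with unit-capacity channels.
Acyclicity is witnessed by a rank function compatible with channel adjacency, and the
source node `s` has no incoming channels. -/
structure Network (V : Type*) (E : Type*) where
  tail : E → V
  head : E → V
  s : V
  no_in_source : ∀ e, head e ≠ s
  rk : E → ℕ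
  acyclic : ∀ d e, head d = tail e → rk d < rk e

namespace Network

variable {V : Type*} {E : Type*}

/-- `p` is a nonempty directed path (a list of channels matching head-to-tail). -/
def IsPath (N : Network V E) (p : List E) : Prop :=
  p ≠ [] ∧ p.Chain' fun d e => N.head d = N.tail e

/-- `p` is a nonempty directed path starting at node `u`. -/
def PathFrom (N : Network V E) (p : List E) (u : V) : Prop :=
  N.IsPath p ∧ ∀ e ∈ p.head?, N.tail e = u

variable [Fintype V] [Fintype E] [DecidableEq V] [DecidableEq E]

/-- `C` is a cut between the source and the collection `T` of nodes: after removing the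
channels of `C` no directed path from the source reaches a node of `T`. -/
def IsCutNodes (N : Network V E) (C : Finset E) (T : Finset V) : Prop :=
  ∀ p : List E, N.PathFrom p N.s → (∃ e ∈ p.getLast?, N.head e ∈ T) → ∃ e ∈ p, e ∈ C

/-- The minimum cut capacity between the source and a collection `T` of nodes. -/
noncomputable def minCutNodes (N : Network V E) (T : Finset V) : ℕ :=
  sInf {n | ∃ C : Finset E, N.IsCutNodes C T ∧ C.card = n}

/-- The minimum cut capacity `C_t` between the source and a node `t`. -/
noncomputable def minCutNode (N : Network V E) (t : V) : ℕ :=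
  N.minCutNodes {t}

/-- `C` is a cut between the source and a collection `ξ` of channels (equivalently, a
cut between the source and the new nodes `n_e`, `e ∈ ξ`, in the network obtained by
subdividing every channel of `ξ`): every path from the source whose last channel lies
in `ξ` must meet `C`. -/
def IsCutChans (N : Network V E) (C : Finset E) (ξ : Finset E) : Prop :=
  ∀ p : List E, N.PathFrom p N.s → (∃ e ∈ p.getLast?, e ∈ ξ) → ∃ e ∈ p, e ∈ C

/-- The minimum cut capacity `C_ξ` between the source and a collection `ξ` of channels. -/
noncomputable def minCutChans (N : Network V E) (ξ : Finset E) : ℕ :=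
  sInf {n | ∃ C : Finset E, N.IsCutChans C ξ ∧ C.card = n}

end Network

section Codes

variable {V E : Type*} [Fintype V] [Fintype E] [DecidableEq V] [DecidableEq E]
variable (F : Type*) [Field F]

/-- `f` is the family of global encoding kernels of the `ω`-dimensional linear network
code with local encoding coefficients `k` (between adjacent real channels) and `ks`
(from the `ω` imaginary message channels at the source): the kernels of the imaginary
message channels form the standard basis of `F^ω` and
`f_e = ∑_{d ∈ In(tail e)} k_{d,e} • f_d`. -/
def IsGlobalKernel (N : Network V E) (ω : ℕ) (k : E → E → F) (ks : Fin ω → E → F)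
    (f : E → Fin ω → F) : Prop :=
  ∀ e, f e = (∑ d : E, if N.head d = N.tail e then k d e • f d else 0)
    + ∑ i : Fin ω, (if N.tail e = N.s then ks i e else 0) • (Pi.single i 1 : Fin ω → F)

/-- `f` is the family of extended global encoding kernels (coordinates indexed by
`Fin ω ⊕ E`, i.e. by `In(s) ∪ E`) of the `ω`-dimensional linear network
error-correction code with local encoding coefficients `k`, `ks`:
`f̃_e = ∑_{d ∈ In(tail e)} k_{d,e} • f̃_d + 1_e`. -/
def IsExtKernel (N : Network V E) (ω : ℕ) (k : E → E → F) (ks : Fin ω → E → F)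
    (f : E → (Fin ω ⊕ E) → F) : Prop :=
  ∀ e, f e = (∑ d : E, if N.head d = N.tail e then k d e • f d else 0)
    + (∑ i : Fin ω, (if N.tail e = N.s then ks i e else 0) • (Pi.single (Sum.inl i) 1 : (Fin ω ⊕ E) → F))
    + (Pi.single (Sum.inr e) 1 : (Fin ω ⊕ E) → F)

variable {ω : ℕ}

/-- The row of the decoding matrix `F̃_T` of a collection `T` of nodes indexed by
`d ∈ In(s) ∪ E` (extended by zero outside the coordinates `In(T)`). -/
def rowT (N : Network V E) (f : E → (Fin ω ⊕ E) → F) (T : Finset V)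
    (d : Fin ω ⊕ E) : E → F :=
  fun e => if N.head e ∈ T then f e d else 0

/-- The message space `Φ(T)` of a collection `T` of nodes. -/
def PhiT (N : Network V E) (f : E → (Fin ω ⊕ E) → F) (T : Finset V) :
    Submodule F (E → F) :=
  Submodule.span F (Set.range fun i : Fin ω => rowT F N f T (Sum.inl i))

/-- The error space `Δ(T, ρ)` of an error pattern `ρ` with respect to `T`. -/
def DeltaT (N : Network V E) (f : E → (Fin ω ⊕ E) → F) (T : Finset V)
    (ρ : Finset E) : Submodule F (E → F) :=
  Submodule.span F ((fun e => rowT F N f T (Sum.inr e)) '' (ρ : Set E))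

/-- The minimum distance `d_min^{(T)}` at a collection `T` of nodes. -/
noncomputable def dminT (N : Network V E) (f : E → (Fin ω ⊕ E) → F) (T : Finset V) : ℕ :=
  sInf {n | ∃ ρ : Finset E, ρ.card = n ∧ DeltaT F N f T ρ ⊓ PhiT F N f T ≠ ⊥}

/-- `ρ₁ ≺_T ρ₂` : `Δ(T,ρ₁) ⊆ Δ(T,ρ₂)` for every `ω`-dimensional `F`-valued LNEC code
on the network. -/
def DominatesT (N : Network V E) (ω : ℕ) (T : Finset V) (ρ₁ ρ₂ : Finset E) : Prop :=
  ∀ (k : E → E → F) (ks : Fin ω → E → F) (f : E → (Fin ω ⊕ E) → F),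
    IsExtKernel F N ω k ks f → DeltaT F N f T ρ₁ ≤ DeltaT F N f T ρ₂

/-- `rank_T(ρ)`, the rank of an error pattern with respect to `T`. -/
noncomputable def rankT (N : Network V E) (ω : ℕ) (T : Finset V) (ρ : Finset E) : ℕ :=
  sInf {n | ∃ ρ' : Finset E, DominatesT F N ω T ρ ρ' ∧ ρ'.card = n}

/-- The row of the decoding matrix `F̃_ξ` of a collection `ξ` of channels indexed by
`d ∈ In(s) ∪ E` (extended by zero outside the coordinates `ξ`). -/
def rowX (N : Network V E) (f : E → (Fin ω ⊕ E) → F) (ξ : Finset E)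
    (d : Fin ω ⊕ E) : E → F :=
  fun e => if e ∈ ξ then f e d else 0

/-- The message space `Φ(ξ)` of a collection `ξ` of channels. -/
def PhiX (N : Network V E) (f : E → (Fin ω ⊕ E) → F) (ξ : Finset E) :
    Submodule F (E → F) :=
  Submodule.span F (Set.range fun i : Fin ω => rowX F N f ξ (Sum.inl i))

/-- The error space `Δ(ξ, ρ)` of an error pattern `ρ` with respect to `ξ`. -/
def DeltaX (N : Network V E) (f : E → (Fin ω ⊕ E) → F) (ξ : Finset E)
    (ρ : Finset E) : Submodule F (E → F) :=
  Submodule.span F ((fun e => rowX F N f ξ (Sum.inr e)) '' (ρ : Set E))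

/-- The minimum distance `d_min^{(ξ)}` at a collection `ξ` of channels. -/
noncomputable def dminX (N : Network V E) (f : E → (Fin ω ⊕ E) → F) (ξ : Finset E) : ℕ :=
  sInf {n | ∃ ρ : Finset E, ρ.card = n ∧ DeltaX F N f ξ ρ ⊓ PhiX F N f ξ ≠ ⊥}

/-- `ρ₁ ≺_ξ ρ₂` : `Δ(ξ,ρ₁) ⊆ Δ(ξ,ρ₂)` for every `ω`-dimensional `F`-valued LNEC code
on the network. -/
def DominatesX (N : Network V E) (ω : ℕ) (ξ : Finset E) (ρ₁ ρ₂ : Finset E) : Prop :=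
  ∀ (k : E → E → F) (ks : Fin ω → E → F) (f : E → (Fin ω ⊕ E) → F),
    IsExtKernel F N ω k ks f → DeltaX F N f ξ ρ₁ ≤ DeltaX F N f ξ ρ₂

/-- `rank_ξ(ρ)`, the rank of an error pattern with respect to `ξ`. -/
noncomputable def rankX (N : Network V E) (ω : ℕ) (ξ : Finset E) (ρ : Finset E) : ℕ :=
  sInf {n | ∃ ρ' : Finset E, DominatesX F N ω ξ ρ ρ' ∧ ρ'.card = n}

/-- Regular LNEC code: `dim Φ(t) = ω` for every non-source node with `C_t ≥ ω`. -/
def Regular (N : Network V E) (f : E → (Fin ω ⊕ E) → F) : Prop :=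
  ∀ t : V, t ≠ N.s → ω ≤ N.minCutNode t →
    Module.finrank F (PhiT F N f ({t} : Finset V)) = ω

/-- Strongly regular LNEC code: `dim Φ(t) = min{ω, C_t}` for every non-source node. -/
def StronglyRegular (N : Network V E) (f : E → (Fin ω ⊕ E) → F) : Prop :=
  ∀ t : V, t ≠ N.s →
    Module.finrank F (PhiT F N f ({t} : Finset V)) = min ω (N.minCutNode t)

/-- Strongly sup-regular LNEC code: `dim Φ(T) = min{ω, C_T}` for every nonempty
collection of non-source nodes. -/
def StronglySupRegular (N : Network V E) (f : E → (Fin ω ⊕ E) → F) : Prop :=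
  ∀ T : Finset V, T.Nonempty → N.s ∉ T →
    Module.finrank F (PhiT F N f T) = min ω (N.minCutNodes T)

/-- Channel-regular LNEC code: `dim Φ(ξ) = min{ω, C_ξ}` for every nonempty collection
of channels. -/
def ChannelRegular (N : Network V E) (f : E → (Fin ω ⊕ E) → F) : Prop :=
  ∀ ξ : Finset E, ξ.Nonempty →
    Module.finrank F (PhiX F N f ξ) = min ω (N.minCutChans ξ)

/-- LNEC multicast MDS code. -/
def IsMulticastMDS (N : Network V E) (f : E → (Fin ω ⊕ E) → F) : Prop :=
  Regular F N f ∧ ∀ t : V, t ≠ N.s → ω ≤ N.minCutNode t →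
    dminT F N f {t} = N.minCutNode t - ω + 1

/-- LNEC broadcast MDS code. -/
def IsBroadcastMDS (N : Network V E) (f : E → (Fin ω ⊕ E) → F) : Prop :=
  StronglyRegular F N f ∧ ∀ t : V, t ≠ N.s →
    (ω ≤ N.minCutNode t → dminT F N f {t} = N.minCutNode t - ω + 1) ∧
    (N.minCutNode t < ω → dminT F N f {t} = 1)

/-- LNEC dispersion MDS code. -/
def IsDispersionMDS (N : Network V E) (f : E → (Fin ω ⊕ E) → F) : Prop :=
  StronglySupRegular F N f ∧ ∀ T : Finset V, T.Nonempty → N.s ∉ T →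
    (ω ≤ N.minCutNodes T → dminT F N f T = N.minCutNodes T - ω + 1) ∧
    (N.minCutNodes T < ω → dminT F N f T = 1)

/-- LNEC generic MDS code. -/
def IsGenericMDS (N : Network V E) (f : E → (Fin ω ⊕ E) → F) : Prop :=
  ChannelRegular F N f ∧ ∀ ξ : Finset E, ξ.Nonempty →
    (ω ≤ N.minCutChans ξ → dminX F N f ξ = N.minCutChans ξ - ω + 1) ∧
    (N.minCutChans ξ < ω → dminX F N f ξ = 1)

/-- `R_t(δ_t)`: the set of error patterns `ρ` with `|ρ| = rank_t(ρ) = δ_t`. -/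
def Rset (N : Network V E) (ω : ℕ) (t : V) : Set (Finset E) :=
  {ρ | ρ.card = N.minCutNode t - ω ∧ rankT F N ω ({t} : Finset V) ρ = N.minCutNode t - ω}

end Codes

section Aux

variable {V E : Type*} [Fintype V] [Fintype E] [DecidableEq V] [DecidableEq E]
variable {F : Type*} [Field F]

/-- An edge is covered by `CUT` if every path from the source ending with it meets `CUT`. -/
def Cov (N : Network V E) (CUT : Finset E) (e : E) : Prop :=
  ∀ p : List E, N.PathFrom p N.s → p.getLast? = some e → ∃ c ∈ p, c ∈ CUT

lemma cov_of_cut {N : Network V E} {CUT : Finset E} {t : V}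
    (hcut : N.IsCutNodes CUT {t}) {e : E} (he : N.head e = t) : Cov N CUT e := by
  intro p hp hlast
  exact hcut p hp ⟨e, by simp [hlast], by simp [he]⟩

lemma cov_pred {N : Network V E} {CUT : Finset E} {e : E} (hcov : Cov N CUT e)
    (heC : e ∉ CUT) {d : E} (hd : N.head d = N.tail e) : Cov N CUT d := by
  intro p hp hlast
  have hp' : N.PathFrom (p ++ [e]) N.s := by
    obtain ⟨⟨hne, hch⟩, hhd⟩ := hp
    refine ⟨⟨by simp, ?_⟩, ?_⟩
    · rw [List.Chain', List.isChain_append]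
      refine ⟨hch, List.isChain_singleton _, ?_⟩
      intro x hx y hy
      simp only [List.head?_cons, Option.mem_some_iff] at hy
      subst hy
      rw [hlast] at hx
      simp only [Option.mem_some_iff] at hx
      subst hx
      exact hd
    · intro a ha
      apply hhd
      cases p with
      | nil => exact absurd rfl hne
      | cons x xs => simpa using ha
  obtain ⟨c, hcp, hcC⟩ := hcov (p ++ [e]) hp' (by simp)
  rcases List.mem_append.mp hcp with h | h
  · exact ⟨c, h, hcC⟩
  · simp only [List.mem_singleton] at h
    subst h
    exact absurd hcC heC

lemma cov_source {N : Network V E} {CUT : Finset E} {e : E} (hcov : Cov N CUT e)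
    (heC : e ∉ CUT) (hts : N.tail e = N.s) : False := by
  obtain ⟨c, hcp, hcC⟩ := hcov [e]
    ⟨⟨by simp, List.isChain_singleton _⟩, by intro a ha; simp at ha; subst ha; exact hts⟩
    (by simp)
  simp only [List.mem_singleton] at hcp
  subst hcp
  exact heC hcC

lemma hfe_point {N : Network V E} {ω : ℕ} {k : E → E → F} {ks : Fin ω → E → F}
    {f : E → (Fin ω ⊕ E) → F} (hf : IsExtKernel F N ω k ks f) (e : E) (x : Fin ω ⊕ E) :
    f e x = (∑ d : E, if N.head d = N.tail e then k d e * f d x else 0)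
      + (if N.tail e = N.s then ∑ j : Fin ω, if x = Sum.inl j then ks j e else 0 else 0)
      + (if x = Sum.inr e then 1 else 0) := by
  have h := congrFun (hf e) x
  simpa [Finset.sum_apply, ite_apply, Pi.single_apply, smul_eq_mul] using h

lemma tri_zero {N : Network V E} {ω : ℕ} {k : E → E → F} {ks : Fin ω → E → F}
    {f : E → (Fin ω ⊕ E) → F} (hf : IsExtKernel F N ω k ks f) :
    ∀ n (e : E), N.rk e < n → ∀ c : E, c ≠ e → ¬ N.rk c < N.rk e → f e (Sum.inr c) = 0 := by
  intro n
  induction n with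
  | zero => omega
  | succ n ih =>
    intro e he c hc hrk
    rw [hfe_point hf e (Sum.inr c)]
    have h1 : (∑ d : E, if N.head d = N.tail e then k d e * f d (Sum.inr c) else 0) = 0 := by
      apply Finset.sum_eq_zero
      intro d _
      by_cases hd : N.head d = N.tail e
      · have hde : N.rk d < N.rk e := N.acyclic d e hd
        have hcd : c ≠ d := by
          rintro rfl; exact hrk hde
        have : f d (Sum.inr c) = 0 := by
          apply ih d (by omega) c hcd
          intro hlt
          exact hrk (lt_trans hlt hde)
        simp [hd, this]
      · simp [hd]
    rw [h1]
    simp [Sum.inr.injEq, hc]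

lemma tri_one {N : Network V E} {ω : ℕ} {k : E → E → F} {ks : Fin ω → E → F}
    {f : E → (Fin ω ⊕ E) → F} (hf : IsExtKernel F N ω k ks f) (e : E) :
    f e (Sum.inr e) = 1 := by
  rw [hfe_point hf e (Sum.inr e)]
  have h1 : (∑ d : E, if N.head d = N.tail e then k d e * f d (Sum.inr e) else 0) = 0 := by
    apply Finset.sum_eq_zero
    intro d _
    by_cases hd : N.head d = N.tail e
    · have hde : N.rk d < N.rk e := N.acyclic d e hd
      have : f d (Sum.inr e) = 0 := by
        apply tri_zero hf (N.rk d + 1) d (by omega) e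
        · rintro rfl; exact lt_irrefl _ hde
        · omega
      simp [hd, this]
    · simp [hd]
  rw [h1]
  simp

/-- Key lemma: the message space at `t` is contained in the error space of any cut. -/
lemma phi_le_delta {N : Network V E} {ω : ℕ} {k : E → E → F} {ks : Fin ω → E → F}
    {f : E → (Fin ω ⊕ E) → F} (hf : IsExtKernel F N ω k ks f) {t : V}
    {CUT : Finset E} (hcut : N.IsCutNodes CUT {t}) :
    PhiT F N f ({t} : Finset V) ≤ DeltaT F N f ({t} : Finset V) CUT := by
  classical
  rw [PhiT, Submodule.span_le]
  rintro _ ⟨i, rfl⟩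
  -- build the matrix of responses on the cut and invert it
  set M : Matrix CUT CUT F := fun c c' => f c.1 (Sum.inr c'.1) with hM
  have hinj : Function.Injective M.mulVecLin := by
    rw [injective_iff_map_eq_zero]
    intro y hy
    by_contra hy0
    have hsupp : (Finset.univ.filter (fun c : CUT => y c ≠ 0)).Nonempty := by
      rw [Finset.filter_nonempty_iff]
      obtain ⟨c, hc⟩ := Function.ne_iff.mp hy0
      exact ⟨c, Finset.mem_univ c, hc⟩
    obtain ⟨c0, hc0mem, hc0min⟩ :=
      Finset.exists_min_image _ (fun c : CUT => N.rk c.1) hsupp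
    simp only [Finset.mem_filter] at hc0mem
    have hz := congrFun hy c0
    rw [Matrix.mulVecLin_apply] at hz
    have hsum : M.mulVec y c0 = y c0 := by
      rw [Matrix.mulVec, dotProduct]
      rw [Finset.sum_eq_single c0]
      · rw [hM]; simp [tri_one hf]
      · intro c' _ hc'
        by_cases hyc' : y c' = 0
        · simp [hyc']
        · have hmem' : c' ∈ Finset.univ.filter (fun c : CUT => y c ≠ 0) := by
            simp [hyc']
          have hle := hc0min c' hmem'
          have : f c0.1 (Sum.inr c'.1) = 0 := by
            apply tri_zero hf (N.rk c0.1 + 1) c0.1 (by omega) c'.1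
            · intro h; exact hc' (Subtype.ext h)
            · omega
          rw [hM]; simp [this]
      · intro h; exact absurd (Finset.mem_univ c0) h
    rw [hz] at hsum
    exact hc0mem.2 hsum.symm
  have hsurj : Function.Surjective M.mulVecLin :=
    (LinearMap.injective_iff_surjective).mp hinj
  obtain ⟨y, hy⟩ := hsurj (fun c : CUT => f c.1 (Sum.inl i))
  set yt : E → F := fun c => if h : c ∈ CUT then y ⟨c, h⟩ else 0 with hyt
  have hycut : ∀ c ∈ CUT, (∑ c' ∈ CUT, yt c' * f c (Sum.inr c')) = f c (Sum.inl i) := by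
    intro c hc
    have h := congrFun hy ⟨c, hc⟩
    rw [Matrix.mulVecLin_apply, Matrix.mulVec, dotProduct] at h
    rw [← h, ← Finset.sum_coe_sort CUT (fun c' => yt c' * f c (Sum.inr c'))]
    apply Finset.sum_congr rfl
    intro c' _
    rw [hyt, hM]
    simp only [Subtype.coe_eta, dif_pos c'.2]
    ring
  -- main induction: the responses agree on all covered edges
  have key : ∀ n (e : E), N.rk e < n → Cov N CUT e →
      (∑ c ∈ CUT, yt c * f e (Sum.inr c)) = f e (Sum.inl i) := by
    intro n
    induction n with
    | zero => omega
    | succ n ih =>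
      intro e he hcov
      by_cases heC : e ∈ CUT
      · exact hycut e heC
      · by_cases hts : N.tail e = N.s
        · exact absurd hts (fun h => cov_source hcov heC h)
        · have hstep : ∀ c ∈ CUT, f e (Sum.inr c)
              = ∑ d : E, if N.head d = N.tail e then k d e * f d (Sum.inr c) else 0 := by
            intro c hc
            rw [hfe_point hf e (Sum.inr c)]
            have : (Sum.inr c : Fin ω ⊕ E) ≠ Sum.inr e := by
              simp only [ne_eq, Sum.inr.injEq]
              rintro rfl; exact heC hc
            simp [this]
          calc (∑ c ∈ CUT, yt c * f e (Sum.inr c))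
              = ∑ c ∈ CUT, ∑ d : E,
                  (if N.head d = N.tail e then yt c * (k d e * f d (Sum.inr c)) else 0) := by
                apply Finset.sum_congr rfl
                intro c hc
                rw [hstep c hc, Finset.mul_sum]
                apply Finset.sum_congr rfl
                intro d _
                by_cases hd : N.head d = N.tail e <;> simp [hd]
            _ = ∑ d : E, ∑ c ∈ CUT,
                  (if N.head d = N.tail e then yt c * (k d e * f d (Sum.inr c)) else 0) :=
                Finset.sum_comm
            _ = ∑ d : E, (if N.head d = N.tail e then k d e * f d (Sum.inl i) else 0) := by
                apply Finset.sum_congr rfl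
                intro d _
                by_cases hd : N.head d = N.tail e
                · simp only [hd, if_true]
                  have hrkd : N.rk d < N.rk e := N.acyclic d e hd
                  have hcovd : Cov N CUT d := cov_pred hcov heC hd
                  have hihd := ih d (by omega) hcovd
                  rw [← hihd, Finset.mul_sum]
                  apply Finset.sum_congr rfl
                  intro c _
                  ring
                · simp [hd]
            _ = f e (Sum.inl i) := by
                rw [hfe_point hf e (Sum.inl i)]
                simp [hts]
  -- conclude membership
  have hrow : rowT F N f ({t} : Finset V) (Sum.inl i)
      = ∑ c ∈ CUT, yt c • rowT F N f ({t} : Finset V) (Sum.inr c) := by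
    funext e'
    rw [Finset.sum_apply]
    simp only [Pi.smul_apply, rowT, smul_eq_mul]
    by_cases hh : N.head e' ∈ ({t} : Finset V)
    · simp only [hh, if_true]
      have ht' : N.head e' = t := by simpa using hh
      have hcov : Cov N CUT e' := cov_of_cut hcut ht'
      exact (key (N.rk e' + 1) e' (by omega) hcov).symm
    · simp [hh]
  show rowT F N f ({t} : Finset V) (Sum.inl i) ∈ DeltaT F N f ({t} : Finset V) CUT
  rw [hrow]
  apply Submodule.sum_mem
  intro c hc
  apply Submodule.smul_mem
  apply Submodule.subset_span
  exact ⟨c, hc, rfl⟩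

end Aux

section Aux2

variable {V E : Type*} [Fintype V] [Fintype E] [DecidableEq V] [DecidableEq E]
variable {F : Type*} [Field F]

lemma exists_min_cut (N : Network V E) (t : V) :
    ∃ CUT : Finset E, N.IsCutNodes CUT {t} ∧ CUT.card = N.minCutNode t := by
  have hne : {n | ∃ C : Finset E, N.IsCutNodes C ({t} : Finset V) ∧ C.card = n}.Nonempty := by
    refine ⟨(Finset.univ : Finset E).card, Finset.univ, ?_, rfl⟩
    intro p hp _
    obtain ⟨e, he⟩ := List.exists_mem_of_ne_nil _ hp.1.1
    exact ⟨e, he, Finset.mem_univ e⟩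
  have := Nat.sInf_mem hne
  obtain ⟨C, hC, hcard⟩ := this
  exact ⟨C, hC, hcard⟩

lemma delta_finrank_le {ω : ℕ} (N : Network V E) (f : E → (Fin ω ⊕ E) → F) (T : Finset V)
    (ρ : Finset E) : Module.finrank F (DeltaT F N f T ρ) ≤ ρ.card := by
  classical
  rw [DeltaT, ← Finset.coe_image]
  exact le_trans (finrank_span_finset_le_card _) (Finset.card_image_le)

lemma main_bound {N : Network V E} {ω : ℕ} {k : E → E → F} {ks : Fin ω → E → F}
    {f : E → (Fin ω ⊕ E) → F} (hf : IsExtKernel F N ω k ks f) {t : V}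
    (hfr : Module.finrank F (PhiT F N f ({t} : Finset V)) = min ω (N.minCutNode t))
    (hm1 : 1 ≤ min ω (N.minCutNode t)) :
    dminT F N f {t} ≤ N.minCutNode t - min ω (N.minCutNode t) + 1 := by
  classical
  obtain ⟨CUT, hcut, hcard⟩ := exists_min_cut N t
  set m := min ω (N.minCutNode t) with hm
  have hmC : m ≤ N.minCutNode t := min_le_right _ _
  obtain ⟨T, hT, hTcard⟩ := Finset.exists_subset_card_eq
    (show m - 1 ≤ CUT.card by omega)
  set S := CUT \ T with hS
  have hScard : S.card = N.minCutNode t - (m - 1) := by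
    rw [hS, Finset.card_sdiff_of_subset hT, hTcard, hcard]
  have hunion : S ∪ T = CUT := Finset.sdiff_union_of_subset hT
  have hsup : DeltaT F N f ({t} : Finset V) S ⊔ DeltaT F N f ({t} : Finset V) T
      = DeltaT F N f ({t} : Finset V) CUT := by
    rw [DeltaT, DeltaT, DeltaT, ← Submodule.span_union, ← Set.image_union,
      ← Finset.coe_union, hunion]
  have hPhiLe : PhiT F N f ({t} : Finset V)
      ≤ DeltaT F N f ({t} : Finset V) S ⊔ DeltaT F N f ({t} : Finset V) T := by
    rw [hsup]; exact phi_le_delta hf hcut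
  have hne : DeltaT F N f ({t} : Finset V) S ⊓ PhiT F N f ({t} : Finset V) ≠ ⊥ := by
    intro hbot
    set Φ := PhiT F N f ({t} : Finset V)
    set DS := DeltaT F N f ({t} : Finset V) S
    set DT := DeltaT F N f ({t} : Finset V) T
    have h1 : Module.finrank F ↥(Φ ⊔ DS) + Module.finrank F ↥(Φ ⊓ DS)
        = Module.finrank F ↥Φ + Module.finrank F ↥DS :=
      Submodule.finrank_sup_add_finrank_inf_eq Φ DS
    have h2 : Φ ⊓ DS = ⊥ := by rw [inf_comm]; exact hbot
    have h3 : Φ ⊔ DS ≤ DS ⊔ DT := sup_le hPhiLe le_sup_left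
    have h4 : Module.finrank F ↥(DS ⊔ DT) + Module.finrank F ↥(DS ⊓ DT)
        = Module.finrank F ↥DS + Module.finrank F ↥DT :=
      Submodule.finrank_sup_add_finrank_inf_eq DS DT
    have h5 : Module.finrank F ↥(Φ ⊔ DS) ≤ Module.finrank F ↥(DS ⊔ DT) :=
      Submodule.finrank_mono h3
    have h6 : Module.finrank F ↥DT ≤ m - 1 := by
      rw [← hTcard]; exact delta_finrank_le N f _ T
    rw [h2, finrank_bot, add_zero, hfr] at h1
    omega
  have hmem : S.card ∈ {n | ∃ ρ : Finset E, ρ.card = n ∧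
      DeltaT F N f ({t} : Finset V) ρ ⊓ PhiT F N f ({t} : Finset V) ≠ ⊥} :=
    ⟨S, rfl, hne⟩
  calc dminT F N f ({t} : Finset V) ≤ S.card := Nat.sInf_le hmem
    _ = N.minCutNode t - m + 1 := by omega

end Aux2

/-- **Weakly Extended Singleton Bound.** For any strongly regular
`ω`-dimensional LNEC code and any non-source node `t`, `d_min^{(t)} ≤ δ_t + 1` if
`C_t ≥ ω`, and `d_min^{(t)} ≤ 1` if `C_t < ω`. -/
theorem statement3 {V E : Type*} [Fintype V] [Fintype E] [DecidableEq V] [DecidableEq E]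
    (F : Type*) [Field F] [Fintype F] (N : Network V E) (ω : ℕ) (hω : 1 ≤ ω)
    (k : E → E → F) (ks : Fin ω → E → F) (f : E → (Fin ω ⊕ E) → F)
    (hf : IsExtKernel F N ω k ks f) (hreg : StronglyRegular F N f)
    (t : V) (ht : t ≠ N.s) :
    (ω ≤ N.minCutNode t → dminT F N f {t} ≤ N.minCutNode t - ω + 1) ∧
    (N.minCutNode t < ω → dminT F N f {t} ≤ 1) := by
  classical
  have hfr := hreg t ht
  constructor
  · intro hωC
    have hm : min ω (N.minCutNode t) = ω := min_eq_left hωC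
    have h := main_bound hf hfr (by omega)
    omega
  · intro hCω
    have hm : min ω (N.minCutNode t) = N.minCutNode t := min_eq_right (le_of_lt hCω)
    by_cases hC0 : N.minCutNode t = 0
    · have hfr0 : Module.finrank F (PhiT F N f ({t} : Finset V)) = 0 := by
        rw [hfr, hm, hC0]
      have hbot : PhiT F N f ({t} : Finset V) = ⊥ := Submodule.finrank_eq_zero.mp hfr0
      have hempty : {n | ∃ ρ : Finset E, ρ.card = n ∧
          DeltaT F N f ({t} : Finset V) ρ ⊓ PhiT F N f ({t} : Finset V) ≠ ⊥} = ∅ := by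
        ext n
        simp only [Set.mem_setOf_eq, Set.mem_empty_iff_false, iff_false, not_exists]
        rintro ρ ⟨_, hnb⟩
        apply hnb
        rw [hbot]
        exact le_bot_iff.mp inf_le_right
      rw [dminT, hempty, Nat.sInf_empty]
      omega
    · have h := main_bound hf hfr (by omega)
      omega
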